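/- Let V be a 2-dimensional subspace of a real inner product space E equipped with a linear map J satisfying J² = -id and ⟨JX,JY⟩ = ⟨X,Y⟩. Then for any X ∈ V, ⟨JX, X⟩ = 0, and for any two orthonormal bases (X,Y) and (X',Y') of V, |⟨X, JY⟩| = |⟨X', JY'⟩|. -/

import Mathlib

noncomputable section

/-- For a 2-dimensional subspace V of a real inner product space with orthogonal complex
    structure J: ⟨JX,X⟩ = 0 for all X ∈ V, and |⟨X,JY⟩| is the same for any two
    orthonormal bases (X,Y), (X',Y') of V. -/
theorem stmt12 {E : Type*} [NormedAddCommGroup E] [InnerProductSpace ℝ E]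
    (J : E →ₗ[ℝ] E) (hJ2 : ∀ x, J (J x) = -x)
    (hJi : ∀ x y : E, (inner ℝ (J x) (J y) : ℝ) = inner ℝ x y)
    (V : Submodule ℝ E) (hV : Module.finrank ℝ V = 2)
    (X Y X' Y' : E)
    (hX : X ∈ V) (hY : Y ∈ V) (hX' : X' ∈ V) (hY' : Y' ∈ V)
    (hXn : ‖X‖ = 1) (hYn : ‖Y‖ = 1) (hXY : (inner ℝ X Y : ℝ) = 0)
    (hXn' : ‖X'‖ = 1) (hYn' : ‖Y'‖ = 1) (hXY' : (inner ℝ X' Y' : ℝ) = 0)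
    (hspan : Submodule.span ℝ {X, Y} = V)
    (hspan' : Submodule.span ℝ {X', Y'} = V) :
    (∀ W : E, W ∈ V → (inner ℝ (J W) W : ℝ) = 0) ∧
    |(inner ℝ X (J Y) : ℝ)| = |(inner ℝ X' (J Y') : ℝ)| := by
  have skew : ∀ x y : E, (inner ℝ (J x) y : ℝ) = - inner ℝ x (J y) := by
    intro x y
    have h := hJi x (J y)
    rw [hJ2, inner_neg_right] at h
    linarith
  have diag : ∀ w : E, (inner ℝ (J w) w : ℝ) = 0 := by
    intro w
    have h := skew w w
    have h2 := real_inner_comm (J w) w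
    linarith
  refine ⟨fun W _ => diag W, ?_⟩
  have hX'' : X' ∈ Submodule.span ℝ ({X, Y} : Set E) := hspan ▸ hX'
  have hY'' : Y' ∈ Submodule.span ℝ ({X, Y} : Set E) := hspan ▸ hY'
  rw [Submodule.mem_span_pair] at hX'' hY''
  obtain ⟨a, b, hab⟩ := hX''
  obtain ⟨c, d, hcd⟩ := hY''
  have hXX : (inner ℝ X X : ℝ) = 1 := by
    rw [real_inner_self_eq_norm_mul_norm, hXn]; ring
  have hYY : (inner ℝ Y Y : ℝ) = 1 := by
    rw [real_inner_self_eq_norm_mul_norm, hYn]; ring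
  have hYX : (inner ℝ Y X : ℝ) = 0 := by rw [real_inner_comm]; exact hXY
  have hJXX : (inner ℝ X (J X) : ℝ) = 0 := by
    have := diag X; rw [real_inner_comm] at this; exact this
  have hJYY : (inner ℝ Y (J Y) : ℝ) = 0 := by
    have := diag Y; rw [real_inner_comm] at this; exact this
  have hYJX : (inner ℝ Y (J X) : ℝ) = - inner ℝ X (J Y) := by
    have h := skew X Y
    rw [real_inner_comm]
    exact h
  -- expand
  have expand : (inner ℝ X' (J Y') : ℝ) = (a * d - b * c) * inner ℝ X (J Y) := by
    rw [← hab, ← hcd]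
    simp only [map_add, map_smul, inner_add_left, inner_add_right, inner_smul_left,
      inner_smul_right, real_inner_smul_left, real_inner_smul_right,
      starRingEnd_apply, star_trivial]
    rw [hJXX, hJYY, hYJX]
    ring
  -- norms
  have na : a ^ 2 + b ^ 2 = 1 := by
    have h := hXn'
    rw [← hab] at h
    have h2 : (inner ℝ (a • X + b • Y) (a • X + b • Y) : ℝ) = 1 := by
      rw [real_inner_self_eq_norm_mul_norm, h]; ring
    simp only [inner_add_left, inner_add_right, real_inner_smul_left,
      real_inner_smul_right, hXX, hYY, hXY, hYX, starRingEnd_apply, star_trivial] at h2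
    linear_combination h2
  have nc : c ^ 2 + d ^ 2 = 1 := by
    have h := hYn'
    rw [← hcd] at h
    have h2 : (inner ℝ (c • X + d • Y) (c • X + d • Y) : ℝ) = 1 := by
      rw [real_inner_self_eq_norm_mul_norm, h]; ring
    simp only [inner_add_left, inner_add_right, real_inner_smul_left,
      real_inner_smul_right, hXX, hYY, hXY, hYX, starRingEnd_apply, star_trivial] at h2
    linear_combination h2
  have northo : a * c + b * d = 0 := by
    have h2 := hXY'
    rw [← hab, ← hcd] at h2
    simp only [inner_add_left, inner_add_right, real_inner_smul_left,
      real_inner_smul_right, hXX, hYY, hXY, hYX, starRingEnd_apply, star_trivial] at h2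
    linear_combination h2
  have hdet : (a * d - b * c) ^ 2 = 1 := by nlinarith
  rw [expand, abs_mul]
  have : |a * d - b * c| = 1 := by
    have := abs_nonneg (a * d - b * c)
    nlinarith [sq_abs (a * d - b * c)]
  rw [this, one_mul]
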